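/- The code C15 = {∅, {2,3}, {1,5}, {4,5}, {3,4}, {1,2}, {1,4,5}, {1,2,5}, {1,2,3}, {2,3,4}, {3,4,5}} on five neurons is not a closed convex code: no closed convex sets U₁,…,U₅ in any ℝᵈ have code of cover equal to C15. -/

import Mathlib

def codeOfCover {n : ℕ} {X : Type*} (U : Fin n → Set X) : Set (Set (Fin n)) :=
  {σ | ∃ x : X, ∀ i, x ∈ U i ↔ i ∈ σ}

private lemma icc_meet {A B : Set ℝ} (hA : IsClosed A) (hB : IsClosed B)
    (hcov : Set.Icc (0:ℝ) 1 ⊆ A ∪ B) (h0 : (0:ℝ) ∈ A) (h1 : (1:ℝ) ∈ B) :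
    ∃ t ∈ Set.Icc (0:ℝ) 1, t ∈ A ∧ t ∈ B := by
  have hA' : IsClosed (A ∩ Set.Icc (0:ℝ) 1) := hA.inter isClosed_Icc
  have hne : (A ∩ Set.Icc (0:ℝ) 1).Nonempty := ⟨0, h0, by norm_num⟩
  have hbdd : BddAbove (A ∩ Set.Icc (0:ℝ) 1) := ⟨1, fun t ht => ht.2.2⟩
  have hβA : sSup (A ∩ Set.Icc (0:ℝ) 1) ∈ A ∩ Set.Icc (0:ℝ) 1 :=
    hA'.csSup_mem hne hbdd
  set β := sSup (A ∩ Set.Icc (0:ℝ) 1) with hβ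
  refine ⟨β, hβA.2, hβA.1, ?_⟩
  rcases eq_or_lt_of_le hβA.2.2 with h | h
  · rwa [h]
  · have hsub : Set.Ioc β 1 ⊆ B := by
      intro t ht
      have htI : t ∈ Set.Icc (0:ℝ) 1 := ⟨le_trans hβA.2.1 ht.1.le, ht.2⟩
      rcases hcov htI with hA1 | hB1
      · exact absurd (le_csSup hbdd ⟨hA1, htI⟩) (not_le.mpr ht.1)
      · exact hB1
    have hcl : β ∈ closure (Set.Ioc β 1) := by
      rw [closure_Ioc h.ne]; exact ⟨le_refl _, h.le⟩
    exact hB.closure_subset (closure_mono hsub hcl)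

private lemma seg_meet {E : Type*} [NormedAddCommGroup E] [NormedSpace ℝ E]
    {V W : Set E} (hV : IsClosed V) (hW : IsClosed W)
    {x y : E} (hx : x ∈ V) (hy : y ∈ W)
    (hcov : ∀ z ∈ segment ℝ x y, z ∈ V ∪ W) :
    ∃ s : ℝ, s ∈ Set.Icc (0:ℝ) 1 ∧ (1-s)•x + s•y ∈ V ∧ (1-s)•x + s•y ∈ W := by
  have hγ : Continuous fun s : ℝ => (1-s)•x + s•y := by fun_prop
  obtain ⟨t, ht, hA, hB⟩ := icc_meet (A := (fun s:ℝ => (1-s)•x + s•y) ⁻¹' V)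
    (B := (fun s:ℝ => (1-s)•x + s•y) ⁻¹' W) (hV.preimage hγ) (hW.preimage hγ)
    (fun s hs => hcov _ ⟨1-s, s, by linarith [hs.1, hs.2], hs.1, by ring, rfl⟩)
    (by simpa using hx) (by simpa using hy)
  exact ⟨t, ht, hA, hB⟩

/-- The code `C15` (neurons `1,…,5` written as `0,…,4`) is not a closed convex code. -/
theorem stmt_16 :
    ¬ ∃ (d : ℕ) (U : Fin 5 → Set (EuclideanSpace ℝ (Fin d))),
      (∀ i, IsClosed (U i)) ∧ (∀ i, Convex ℝ (U i)) ∧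
      codeOfCover U = ({∅, {1, 2}, {0, 4}, {3, 4}, {2, 3}, {0, 1}, {0, 3, 4},
        {0, 1, 4}, {0, 1, 2}, {1, 2, 3}, {2, 3, 4}} : Set (Set (Fin 5))) := by
  rintro ⟨d, U, hcl, hcv, hcode⟩
  -- every point's support is a codeword
  have hsupp : ∀ y, {i | y ∈ U i} ∈ ({∅, {1, 2}, {0, 4}, {3, 4}, {2, 3}, {0, 1}, {0, 3, 4},
      {0, 1, 4}, {0, 1, 2}, {1, 2, 3}, {2, 3, 4}} : Set (Set (Fin 5))) := by
    intro y; rw [← hcode]; exact ⟨y, fun i => Iff.rfl⟩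
  have master : ∀ y, ∀ P : Set (Fin 5) → Prop,
      P ∅ → P {1,2} → P {0,4} → P {3,4} → P {2,3} → P {0,1} → P {0,3,4} →
      P {0,1,4} → P {0,1,2} → P {1,2,3} → P {2,3,4} → P {i | y ∈ U i} := by
    intro y P p1 p2 p3 p4 p5 p6 p7 p8 p9 p10 p11
    have h := hsupp y
    simp only [Set.mem_insert_iff, Set.mem_singleton_iff] at h
    rcases h with h|h|h|h|h|h|h|h|h|h|h <;> rw [h] <;> assumption
  -- containment lemmas
  have h0imp : ∀ y, y ∈ U 0 → y ∈ U 1 ∨ y ∈ U 4 := fun y =>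
    master y (fun L => (0:Fin 5) ∈ L → (1:Fin 5) ∈ L ∨ (4:Fin 5) ∈ L)
      (by simp) (by simp) (by simp) (by simp) (by simp) (by simp) (by simp) (by simp)
      (by simp) (by simp) (by simp)
  have h1imp : ∀ y, y ∈ U 1 → y ∈ U 0 ∨ y ∈ U 2 := fun y =>
    master y (fun L => (1:Fin 5) ∈ L → (0:Fin 5) ∈ L ∨ (2:Fin 5) ∈ L)
      (by simp) (by simp) (by simp) (by simp) (by simp) (by simp) (by simp) (by simp)
      (by simp) (by simp) (by simp)
  have h2imp : ∀ y, y ∈ U 2 → y ∈ U 1 ∨ y ∈ U 3 := fun y =>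
    master y (fun L => (2:Fin 5) ∈ L → (1:Fin 5) ∈ L ∨ (3:Fin 5) ∈ L)
      (by simp) (by simp) (by simp) (by simp) (by simp) (by simp) (by simp) (by simp)
      (by simp) (by simp) (by simp)
  have hK3 : ∀ y, y ∈ U 0 → y ∈ U 1 → y ∈ U 2 → y ∈ U 3 → False := fun y =>
    master y (fun L => (0:Fin 5) ∈ L → (1:Fin 5) ∈ L → (2:Fin 5) ∈ L → (3:Fin 5) ∈ L → False)
      (by simp) (by simp) (by simp) (by simp) (by simp) (by simp) (by simp) (by simp)
      (by simp) (by simp) (by simp)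
  have hK4 : ∀ y, y ∈ U 0 → y ∈ U 1 → y ∈ U 2 → y ∈ U 4 → False := fun y =>
    master y (fun L => (0:Fin 5) ∈ L → (1:Fin 5) ∈ L → (2:Fin 5) ∈ L → (4:Fin 5) ∈ L → False)
      (by simp) (by simp) (by simp) (by simp) (by simp) (by simp) (by simp) (by simp)
      (by simp) (by simp) (by simp)
  -- atoms
  have ha : ∃ a, ∀ i, a ∈ U i ↔ i ∈ ({0,3,4} : Set (Fin 5)) := by
    have h : ({0,3,4} : Set (Fin 5)) ∈ codeOfCover U := by rw [hcode]; simp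
    exact h
  have hb : ∃ b, ∀ i, b ∈ U i ↔ i ∈ ({2,3,4} : Set (Fin 5)) := by
    have h : ({2,3,4} : Set (Fin 5)) ∈ codeOfCover U := by rw [hcode]; simp
    exact h
  have hx012 : ∃ x0, ∀ i, x0 ∈ U i ↔ i ∈ ({0,1,2} : Set (Fin 5)) := by
    have h : ({0,1,2} : Set (Fin 5)) ∈ codeOfCover U := by rw [hcode]; simp
    exact h
  obtain ⟨a, haat⟩ := ha
  obtain ⟨b, hbat⟩ := hb
  obtain ⟨x0, hx0at⟩ := hx012
  have haU0 : a ∈ U 0 := (haat 0).mpr (by simp)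
  have haU3 : a ∈ U 3 := (haat 3).mpr (by simp)
  have haU4 : a ∈ U 4 := (haat 4).mpr (by simp)
  have hbU2 : b ∈ U 2 := (hbat 2).mpr (by simp)
  have hbU3 : b ∈ U 3 := (hbat 3).mpr (by simp)
  have hx0K : x0 ∈ U 0 ∩ U 1 ∩ U 2 :=
    ⟨⟨(hx0at 0).mpr (by simp), (hx0at 1).mpr (by simp)⟩, (hx0at 2).mpr (by simp)⟩
  -- the segment M
  set M : Set (EuclideanSpace ℝ (Fin d)) := segment ℝ a b with hMdef
  have hMne : M.Nonempty := ⟨a, left_mem_segment ℝ a b⟩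
  have hMcmp : IsCompact M := by
    rw [hMdef, segment_eq_image]
    exact isCompact_Icc.image (by fun_prop)
  have hMa : ∀ m ∈ M, dist m a ≤ dist a b := by
    rintro m ⟨α, β, hα, hβ, hsum, rfl⟩
    have hαβ : α = 1 - β := by linarith
    subst hαβ
    have he : (1-β)•a + β•b - a = β•(b - a) := by module
    rw [dist_eq_norm, he, norm_smul, Real.norm_eq_abs, abs_of_nonneg hβ, dist_eq_norm,
      norm_sub_rev a b]
    nlinarith [norm_nonneg (b - a), le_of_eq (rfl : ‖b-a‖ = ‖b-a‖)]
  have hKcl : IsClosed (U 0 ∩ U 1 ∩ U 2) := ((hcl 0).inter (hcl 1)).inter (hcl 2)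
  have hdistbound : ∀ y : EuclideanSpace ℝ (Fin d), dist y a ≤ Metric.infDist y M + dist a b := by
    intro y
    obtain ⟨m, hm, hym⟩ := hMcmp.exists_infDist_eq_dist hMne y
    calc dist y a ≤ dist y m + dist m a := dist_triangle y m a
      _ ≤ Metric.infDist y M + dist a b := add_le_add (le_of_eq hym.symm) (hMa m hm)
  -- minimizer of distance to M over K
  have hcmp : IsCompact ((U 0 ∩ U 1 ∩ U 2) ∩
      Metric.closedBall a (Metric.infDist x0 M + dist a b)) :=
    (isCompact_closedBall a _).inter_left hKcl
  have hx0' : x0 ∈ (U 0 ∩ U 1 ∩ U 2) ∩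
      Metric.closedBall a (Metric.infDist x0 M + dist a b) :=
    ⟨hx0K, by simpa [Metric.mem_closedBall] using hdistbound x0⟩
  obtain ⟨x, hx, hxmin⟩ := hcmp.exists_isMinOn ⟨x0, hx0'⟩
    (Metric.continuous_infDist_pt M).continuousOn
  have hxK : x ∈ U 0 ∩ U 1 ∩ U 2 := hx.1
  have hmin : ∀ y ∈ U 0 ∩ U 1 ∩ U 2, Metric.infDist x M ≤ Metric.infDist y M := by
    intro y hy
    by_cases hyb : y ∈ Metric.closedBall a (Metric.infDist x0 M + dist a b)
    · exact hxmin ⟨hy, hyb⟩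
    · have h1 : Metric.infDist x M ≤ Metric.infDist x0 M := hxmin hx0'
      have h2 : Metric.infDist x0 M + dist a b < dist y a := by
        simpa [Metric.mem_closedBall] using hyb
      have h3 := hdistbound y
      linarith
  have hxU0 : x ∈ U 0 := hxK.1.1
  have hxU1 : x ∈ U 1 := hxK.1.2
  have hxU2 : x ∈ U 2 := hxK.2
  have hxU3 : x ∉ U 3 := fun h3 => hK3 x hxU0 hxU1 hxU2 h3
  have hxU4 : x ∉ U 4 := fun h4 => hK4 x hxU0 hxU1 hxU2 h4
  -- distance is positive
  have hxM : x ∉ M := fun hm => hxU3 ((hcv 3).segment_subset haU3 hbU3 hm)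
  have hd0 : 0 < Metric.infDist x M := by
    rcases eq_or_lt_of_le (Metric.infDist_nonneg : 0 ≤ Metric.infDist x M) with h | h
    · exfalso
      apply hxM
      have hcl' : x ∈ closure M := (Metric.mem_closure_iff_infDist_zero hMne).mpr h.symm
      rwa [hMcmp.isClosed.closure_eq] at hcl'
    · exact h
  -- nearest point
  obtain ⟨p, hpM, hxp⟩ := hMcmp.exists_infDist_eq_dist hMne x
  -- first segment: from x to a, inside U0, meet U1 and U4
  obtain ⟨s, hsI, hzaU1, hzaU4⟩ := seg_meet (hcl 1) (hcl 4) hxU1 haU4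
    (fun z hz => h0imp z ((hcv 0).segment_subset hxU0 haU0 hz))
  have hzaU0 : (1-s)•x + s•a ∈ U 0 := (hcv 0).segment_subset hxU0 haU0
    ⟨1-s, s, by linarith [hsI.1, hsI.2], hsI.1, by ring, rfl⟩
  have hs0 : 0 < s := by
    rcases lt_or_eq_of_le hsI.1 with h | h
    · exact h
    · exfalso
      apply hxU4
      have hxa : (1-s)•x + s•a = x := by rw [← h]; simp
      rwa [hxa] at hzaU4
  -- second segment: from x to b, inside U2, meet U1 and U3
  obtain ⟨t, htI, hzbU1, hzbU3⟩ := seg_meet (hcl 1) (hcl 3) hxU1 hbU3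
    (fun z hz => h2imp z ((hcv 2).segment_subset hxU2 hbU2 hz))
  have hzbU2 : (1-t)•x + t•b ∈ U 2 := (hcv 2).segment_subset hxU2 hbU2
    ⟨1-t, t, by linarith [htI.1, htI.2], htI.1, by ring, rfl⟩
  have ht0 : 0 < t := by
    rcases lt_or_eq_of_le htI.1 with h | h
    · exact h
    · exfalso
      apply hxU3
      have hxb : (1-t)•x + t•b = x := by rw [← h]; simp
      rwa [hxb] at hzbU3
  -- third segment: from za to zb, inside U1, meet U0 and U2
  obtain ⟨u, huI, hwU0, hwU2⟩ := seg_meet (hcl 0) (hcl 2) hzaU0 hzbU2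
    (fun z hz => h1imp z ((hcv 1).segment_subset hzaU1 hzbU1 hz))
  have hwU1 : (1-u)•((1-s)•x + s•a) + u•((1-t)•x + t•b) ∈ U 1 :=
    (hcv 1).segment_subset hzaU1 hzbU1
      ⟨1-u, u, by linarith [huI.1, huI.2], huI.1, by ring, rfl⟩
  have hwK : (1-u)•((1-s)•x + s•a) + u•((1-t)•x + t•b) ∈ U 0 ∩ U 1 ∩ U 2 :=
    ⟨⟨hwU0, hwU1⟩, hwU2⟩
  -- the new point is strictly closer to M : contradiction
  have hμpos : 0 < (1-u)*s + u*t := by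
    rcases lt_or_eq_of_le huI.2 with h | h
    · have h1 : 0 < (1-u)*s := mul_pos (by linarith) hs0
      have h2 : 0 ≤ u*t := mul_nonneg huI.1 ht0.le
      linarith
    · rw [h]; simpa using ht0
  have hμ1 : (1-u)*s + u*t ≤ 1 := by
    nlinarith [mul_nonneg (by linarith [huI.2] : (0:ℝ) ≤ 1-u) (by linarith [hsI.2] : (0:ℝ) ≤ 1-s),
      mul_nonneg huI.1 (by linarith [htI.2] : (0:ℝ) ≤ 1-t)]
  have hc1 : 0 ≤ (1-u)*s/((1-u)*s + u*t) :=
    div_nonneg (mul_nonneg (by linarith [huI.2]) hs0.le) hμpos.le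
  have hc2 : 0 ≤ u*t/((1-u)*s + u*t) :=
    div_nonneg (mul_nonneg huI.1 ht0.le) hμpos.le
  have hcsum : (1-u)*s/((1-u)*s + u*t) + u*t/((1-u)*s + u*t) = 1 := by
    rw [← add_div, div_self hμpos.ne']
  have hmM : ((1-u)*s/((1-u)*s + u*t))•a + (u*t/((1-u)*s + u*t))•b ∈ M :=
    ⟨_, _, hc1, hc2, hcsum, rfl⟩
  have hqM : (1-((1-u)*s + u*t))•p + ((1-u)*s + u*t)•
      (((1-u)*s/((1-u)*s + u*t))•a + (u*t/((1-u)*s + u*t))•b) ∈ M :=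
    (convex_segment a b) hpM hmM (by linarith) hμpos.le (by ring)
  have hμm : ((1-u)*s + u*t)•(((1-u)*s/((1-u)*s + u*t))•a + (u*t/((1-u)*s + u*t))•b)
      = ((1-u)*s)•a + (u*t)•b := by
    rw [smul_add, smul_smul, smul_smul]
    congr 2
    · field_simp
    · field_simp
  have hwq : (1-u)•((1-s)•x + s•a) + u•((1-t)•x + t•b)
      - ((1-((1-u)*s + u*t))•p + (((1-u)*s)•a + (u*t)•b))
      = (1-((1-u)*s + u*t))•(x - p) := by
    module
  have hdw : dist ((1-u)•((1-s)•x + s•a) + u•((1-t)•x + t•b))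
      ((1-((1-u)*s + u*t))•p + (((1-u)*s)•a + (u*t)•b))
      = (1-((1-u)*s + u*t)) * dist x p := by
    rw [dist_eq_norm, hwq, norm_smul, Real.norm_eq_abs, abs_of_nonneg (by linarith),
      dist_eq_norm]
  have hle : Metric.infDist ((1-u)•((1-s)•x + s•a) + u•((1-t)•x + t•b)) M
      ≤ (1-((1-u)*s + u*t)) * dist x p := by
    calc Metric.infDist ((1-u)•((1-s)•x + s•a) + u•((1-t)•x + t•b)) M
        ≤ dist ((1-u)•((1-s)•x + s•a) + u•((1-t)•x + t•b))
          ((1-((1-u)*s + u*t))•p + (((1-u)*s)•a + (u*t)•b)) := by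
          refine Metric.infDist_le_dist_of_mem ?_
          rw [show (1-((1-u)*s + u*t))•p + (((1-u)*s)•a + (u*t)•b)
              = (1-((1-u)*s + u*t))•p + ((1-u)*s + u*t)•
                (((1-u)*s/((1-u)*s + u*t))•a + (u*t/((1-u)*s + u*t))•b) by rw [hμm]]
          exact hqM
      _ = (1-((1-u)*s + u*t)) * dist x p := hdw
  have hge := hmin _ hwK
  rw [hxp] at hge hd0
  nlinarith [mul_pos hμpos hd0]
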